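/- Let B₀ > 0, ε > 0, ω ≥ 0 and let g : (0,∞) → ℝ be a measurable function with 0 ≤ g(r) ≤ B₀·exp(−εB₀r²) for all r > 0. Define ψ_k(r) = √(B₀/Γ(k+1))·(B₀/2)^{k/2}·r^k·exp(−B₀r²/4) and λ_k = 2kω·∫₀^∞ ψ_k(r)²·(∫_r^∞ g(s)·s ds)·r^{−1} dr. Then ω·∫₀^∞ g(r)·r dr ≤ ω/(2ε), and for every integer k ≥ 1: λ_k ≤ (ω·B₀/(2ε))·(1+2ε)^{−k}. -/

import Mathlib

open Real MeasureTheory Set Filter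

private lemma tail_exp_int {a : ℝ} (ha : 0 < a) (r : ℝ) :
    ∫ s in Set.Ioi r, Real.exp (-(a * s ^ 2)) * s = Real.exp (-(a * r ^ 2)) / (2 * a) := by
  have hd : ∀ x ∈ Set.Ici r, HasDerivAt (fun s => -Real.exp (-(a * s ^ 2)) / (2 * a))
      (Real.exp (-(a * x ^ 2)) * x) x := by
    intro x _
    have h1 : HasDerivAt (fun s : ℝ => -(a * s ^ 2)) (-(a * (2 * x))) x := by
      simpa using ((hasDerivAt_pow 2 x).const_mul a).fun_neg
    have h2 : HasDerivAt (fun s => -Real.exp (-(a * s ^ 2)) / (2 * a))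
        (-(Real.exp (-(a * x ^ 2)) * -(a * (2 * x))) / (2 * a)) x :=
      (h1.exp.fun_neg).div_const (2 * a)
    convert h2 using 1
    field_simp
  have hi : IntegrableOn (fun s => Real.exp (-(a * s ^ 2)) * s) (Set.Ioi r) := by
    have := (integrable_mul_exp_neg_mul_sq ha).integrableOn (s := Set.Ioi r)
    simpa [neg_mul, mul_comm] using this
  have ht : Filter.Tendsto (fun s => -Real.exp (-(a * s ^ 2)) / (2 * a)) Filter.atTop (nhds 0) := by
    have h0 : Filter.Tendsto (fun s : ℝ => -(a * s ^ 2)) Filter.atTop Filter.atBot := by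
      have h1 := (tendsto_pow_atTop (n := 2) (by norm_num)).const_mul_atTop ha
      exact Filter.tendsto_neg_atBot_iff.mpr h1
    have := (Real.tendsto_exp_atBot.comp h0).neg.div_const (2 * a)
    simpa using this
  have key := MeasureTheory.integral_Ioi_of_hasDerivAt_of_tendsto' hd hi ht
  rw [key]
  ring

private lemma tail_bound {B₀ ε : ℝ} (hB₀ : 0 < B₀) (hε : 0 < ε) {g : ℝ → ℝ}
    (hg : ∀ r : ℝ, 0 < r → 0 ≤ g r ∧ g r ≤ B₀ * Real.exp (-ε * B₀ * r ^ 2))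
    {r : ℝ} (hr : 0 ≤ r) :
    (∫ s in Set.Ioi r, g s * s) ≤ Real.exp (-(ε * B₀ * r ^ 2)) / (2 * ε) := by
  have ha : 0 < ε * B₀ := mul_pos hε hB₀
  have hb : IntegrableOn (fun s => B₀ * (Real.exp (-(ε * B₀ * s ^ 2)) * s)) (Set.Ioi r) := by
    have h := ((integrable_mul_exp_neg_mul_sq ha).integrableOn (s := Set.Ioi r)).const_mul B₀
    exact h.congr (Filter.EventuallyEq.of_eq (funext fun x => by ring_nf))
  have h1 : (∫ s in Set.Ioi r, g s * s)
      ≤ ∫ s in Set.Ioi r, B₀ * (Real.exp (-(ε * B₀ * s ^ 2)) * s) := by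
    refine integral_mono_of_nonneg ?_ hb ?_
    · filter_upwards [ae_restrict_mem measurableSet_Ioi] with s hs
      have hs0 : 0 < s := lt_of_le_of_lt hr hs
      exact mul_nonneg (hg s hs0).1 hs0.le
    · filter_upwards [ae_restrict_mem measurableSet_Ioi] with s hs
      have hs0 : 0 < s := lt_of_le_of_lt hr hs
      have h2 := (hg s hs0).2
      have := mul_le_mul_of_nonneg_right h2 hs0.le
      calc g s * s ≤ B₀ * Real.exp (-ε * B₀ * s ^ 2) * s := this
        _ = B₀ * (Real.exp (-(ε * B₀ * s ^ 2)) * s) := by ring_nf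
  have h2 : (∫ s in Set.Ioi r, B₀ * (Real.exp (-(ε * B₀ * s ^ 2)) * s))
      = Real.exp (-(ε * B₀ * r ^ 2)) / (2 * ε) := by
    rw [integral_const_mul, tail_exp_int ha r]
    field_simp
  linarith

theorem gaussian_decay_estimates
    (B₀ ε ω : ℝ) (hB₀ : 0 < B₀) (hε : 0 < ε) (hω : 0 ≤ ω)
    (g : ℝ → ℝ) (hgmeas : Measurable g)
    (hg : ∀ r : ℝ, 0 < r → 0 ≤ g r ∧ g r ≤ B₀ * Real.exp (-ε * B₀ * r ^ 2))
    (ψ : ℕ → ℝ → ℝ)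
    (hψ : ∀ (k : ℕ) (r : ℝ), ψ k r = Real.sqrt (B₀ / Real.Gamma ((k : ℝ) + 1))
        * (B₀ / 2) ^ ((k : ℝ) / 2) * r ^ k * Real.exp (-B₀ * r ^ 2 / 4))
    (lam : ℕ → ℝ)
    (hlam : ∀ k : ℕ, lam k = 2 * k * ω
        * ∫ r in Set.Ioi (0 : ℝ), ψ k r ^ 2 * (∫ s in Set.Ioi r, g s * s) * r⁻¹) :
    ω * (∫ r in Set.Ioi (0 : ℝ), g r * r) ≤ ω / (2 * ε)
      ∧ ∀ k : ℕ, 1 ≤ k → lam k ≤ ω * B₀ / (2 * ε) * ((1 + 2 * ε) ^ k)⁻¹ := by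
  constructor
  · -- flux bound
    have h := tail_bound hB₀ hε hg (le_refl (0:ℝ))
    simp only [ne_eq, OfNat.ofNat_ne_zero, not_false_iff, zero_pow, mul_zero, neg_zero,
      Real.exp_zero] at h
    calc ω * (∫ r in Set.Ioi (0:ℝ), g r * r) ≤ ω * (1 / (2 * ε)) :=
          mul_le_mul_of_nonneg_left h hω
      _ = ω / (2 * ε) := by ring
  · intro k hk
    have hkr : (1 : ℝ) ≤ (k : ℝ) := by exact_mod_cast hk
    have hkr0 : (0 : ℝ) < (k : ℝ) := lt_of_lt_of_le one_pos hkr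
    have hΓpos : 0 < Real.Gamma (k : ℝ) := Real.Gamma_pos_of_pos hkr0
    have hΓ1 : Real.Gamma ((k : ℝ) + 1) = (k : ℝ) * Real.Gamma (k : ℝ) :=
      Real.Gamma_add_one (ne_of_gt hkr0)
    set c2 : ℝ := B₀ / Real.Gamma ((k : ℝ) + 1) * (B₀ / 2) ^ k with hc2
    have hc2nonneg : 0 ≤ c2 := by
      apply mul_nonneg
      · exact div_nonneg hB₀.le (by rw [hΓ1]; positivity)
      · positivity
    -- squared eigenfunction
    have hψ2 : ∀ r : ℝ, ψ k r ^ 2 = c2 * r ^ (2 * k) * Real.exp (-(B₀ * r ^ 2 / 2)) := by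
      intro r
      rw [hψ]
      have hsq : Real.sqrt (B₀ / Real.Gamma ((k : ℝ) + 1)) ^ 2
          = B₀ / Real.Gamma ((k : ℝ) + 1) := by
        apply Real.sq_sqrt
        refine div_nonneg hB₀.le ?_
        rw [hΓ1]; positivity
      have hrp : ((B₀ / 2) ^ ((k : ℝ) / 2)) ^ 2 = (B₀ / 2) ^ k := by
        rw [← Real.rpow_natCast ((B₀ / 2) ^ ((k : ℝ) / 2)) 2,
          ← Real.rpow_mul (by positivity)]
        norm_num
      have hexp : Real.exp (-B₀ * r ^ 2 / 4) ^ 2 = Real.exp (-(B₀ * r ^ 2 / 2)) := by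
        rw [sq, ← Real.exp_add]
        ring_nf
      have hpow : (r ^ k) ^ 2 = r ^ (2 * k) := by rw [← pow_mul, mul_comm]
      calc (Real.sqrt (B₀ / Real.Gamma ((k : ℝ) + 1)) * (B₀ / 2) ^ ((k : ℝ) / 2) * r ^ k
            * Real.exp (-B₀ * r ^ 2 / 4)) ^ 2
          = Real.sqrt (B₀ / Real.Gamma ((k : ℝ) + 1)) ^ 2 * ((B₀ / 2) ^ ((k : ℝ) / 2)) ^ 2
            * (r ^ k) ^ 2 * Real.exp (-B₀ * r ^ 2 / 4) ^ 2 := by ring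
        _ = c2 * r ^ (2 * k) * Real.exp (-(B₀ * r ^ 2 / 2)) := by
            rw [hsq, hrp, hexp, hpow, hc2]; try ring
    set b : ℝ := (1 / 2 + ε) * B₀ with hbdef
    have hbpos : 0 < b := by positivity
    -- the majorant and its integral
    have hmaj_int : IntegrableOn
        (fun r : ℝ => c2 / (2 * ε) * (r ^ (2 * k - 1) * Real.exp (-(b * r ^ 2))))
        (Set.Ioi 0) := by
      have h0 : IntegrableOn (fun r : ℝ => r ^ ((2 * (k : ℝ) - 1) : ℝ) * Real.exp (-b * r ^ 2))
          (Set.Ioi 0) := integrableOn_rpow_mul_exp_neg_mul_sq hbpos (by linarith)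
      have h1 : IntegrableOn (fun r : ℝ => r ^ (2 * k - 1) * Real.exp (-(b * r ^ 2)))
          (Set.Ioi 0) := by
        refine h0.congr_fun (fun x hx => ?_) measurableSet_Ioi
        have hx0 : 0 < x := hx
        have : ((2 * (k : ℝ) - 1) : ℝ) = ((2 * k - 1 : ℕ) : ℝ) := by
          have : (1:ℕ) ≤ 2 * k := by omega
          push_cast [Nat.cast_sub this]
          try ring
        rw [this]; beta_reduce; rw [Real.rpow_natCast, neg_mul]
      exact h1.const_mul _
    have hIval : ∫ r in Set.Ioi (0:ℝ), r ^ (2 * k - 1) * Real.exp (-(b * r ^ 2))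
        = ((b ^ k)⁻¹) * (1 / 2) * Real.Gamma (k : ℝ) := by
      have h0 := integral_rpow_mul_exp_neg_mul_rpow (p := 2) (q := 2 * (k : ℝ) - 1)
        (by norm_num) (by linarith) hbpos
      have hcongr : ∫ r in Set.Ioi (0:ℝ), r ^ (2 * k - 1) * Real.exp (-(b * r ^ 2))
          = ∫ x in Set.Ioi (0:ℝ), x ^ ((2 * (k : ℝ) - 1) : ℝ) * Real.exp (-b * x ^ (2:ℝ)) := by
        refine setIntegral_congr_fun measurableSet_Ioi (fun x hx => ?_)
        have hx0 : (0:ℝ) < x := hx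
        have e1 : ((2 * (k : ℝ) - 1) : ℝ) = ((2 * k - 1 : ℕ) : ℝ) := by
          have : (1:ℕ) ≤ 2 * k := by omega
          push_cast [Nat.cast_sub this]
          try ring
        rw [e1, Real.rpow_natCast, Real.rpow_two, neg_mul]
      rw [hcongr, h0]
      have e2 : (-(2 * (k : ℝ) - 1 + 1) / 2) = -(k : ℝ) := by ring
      have e3 : ((2 * (k : ℝ) - 1 + 1) / 2) = (k : ℝ) := by ring
      rw [e2, e3, Real.rpow_neg hbpos.le, Real.rpow_natCast]
      try ring
    -- pointwise bound of the integrand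
    have hibound : (∫ r in Set.Ioi (0:ℝ), ψ k r ^ 2 * (∫ s in Set.Ioi r, g s * s) * r⁻¹)
        ≤ ∫ r in Set.Ioi (0:ℝ), c2 / (2 * ε) * (r ^ (2 * k - 1) * Real.exp (-(b * r ^ 2))) := by
      refine integral_mono_of_nonneg ?_ hmaj_int ?_
      · filter_upwards [ae_restrict_mem measurableSet_Ioi] with r hr
        have hr0 : (0:ℝ) < r := hr
        have hInn : 0 ≤ ∫ s in Set.Ioi r, g s * s := by
          apply setIntegral_nonneg measurableSet_Ioi
          intro s hs
          have hs0 : 0 < s := lt_trans hr0 hs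
          exact mul_nonneg (hg s hs0).1 hs0.le
        have := sq_nonneg (ψ k r)
        positivity
      · filter_upwards [ae_restrict_mem measurableSet_Ioi] with r hr
        have hr0 : (0:ℝ) < r := hr
        have hI : (∫ s in Set.Ioi r, g s * s) ≤ Real.exp (-(ε * B₀ * r ^ 2)) / (2 * ε) :=
          tail_bound hB₀ hε hg hr0.le
        have hψnn : 0 ≤ c2 * r ^ (2 * k) * Real.exp (-(B₀ * r ^ 2 / 2)) := by positivity
        calc ψ k r ^ 2 * (∫ s in Set.Ioi r, g s * s) * r⁻¹
            = c2 * r ^ (2 * k) * Real.exp (-(B₀ * r ^ 2 / 2))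
              * (∫ s in Set.Ioi r, g s * s) * r⁻¹ := by rw [hψ2]
          _ ≤ c2 * r ^ (2 * k) * Real.exp (-(B₀ * r ^ 2 / 2))
              * (Real.exp (-(ε * B₀ * r ^ 2)) / (2 * ε)) * r⁻¹ := by
              apply mul_le_mul_of_nonneg_right _ (inv_nonneg.mpr hr0.le)
              exact mul_le_mul_of_nonneg_left hI hψnn
          _ = c2 / (2 * ε) * (r ^ (2 * k - 1) * Real.exp (-(b * r ^ 2))) := by
              have hrpow : r ^ (2 * k) * r⁻¹ = r ^ (2 * k - 1) := by
                have h2k : 2 * k = (2 * k - 1) + 1 := by omega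
                rw [h2k, pow_succ]
                field_simp
                simp
              have hexp2 : Real.exp (-(B₀ * r ^ 2 / 2)) * Real.exp (-(ε * B₀ * r ^ 2))
                  = Real.exp (-(b * r ^ 2)) := by
                rw [← Real.exp_add, hbdef]
                ring_nf
              calc c2 * r ^ (2 * k) * Real.exp (-(B₀ * r ^ 2 / 2))
                    * (Real.exp (-(ε * B₀ * r ^ 2)) / (2 * ε)) * r⁻¹
                  = c2 / (2 * ε) * ((r ^ (2 * k) * r⁻¹)
                    * (Real.exp (-(B₀ * r ^ 2 / 2)) * Real.exp (-(ε * B₀ * r ^ 2)))) := by ring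
                _ = c2 / (2 * ε) * (r ^ (2 * k - 1) * Real.exp (-(b * r ^ 2))) := by
                    rw [hrpow, hexp2]
    -- put it together
    rw [hlam]
    have hcoef : (0:ℝ) ≤ 2 * k * ω := by positivity
    have step : 2 * (k:ℝ) * ω * (∫ r in Set.Ioi (0:ℝ), ψ k r ^ 2
        * (∫ s in Set.Ioi r, g s * s) * r⁻¹)
        ≤ 2 * (k:ℝ) * ω * ∫ r in Set.Ioi (0:ℝ),
          c2 / (2 * ε) * (r ^ (2 * k - 1) * Real.exp (-(b * r ^ 2))) :=
      mul_le_mul_of_nonneg_left hibound hcoef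
    have hval : 2 * (k:ℝ) * ω * ∫ r in Set.Ioi (0:ℝ),
        c2 / (2 * ε) * (r ^ (2 * k - 1) * Real.exp (-(b * r ^ 2)))
        = ω * B₀ / (2 * ε) * ((1 + 2 * ε) ^ k)⁻¹ := by
      rw [integral_const_mul, hIval, hc2, hΓ1]
      have hbk : b ^ k = (1 + 2 * ε) ^ k * (B₀ / 2) ^ k := by
        rw [← mul_pow]
        congr 1
        rw [hbdef]; ring
      rw [hbk]
      have h1 : Real.Gamma (k:ℝ) ≠ 0 := ne_of_gt hΓpos
      have h2 : (k:ℝ) ≠ 0 := ne_of_gt hkr0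
      have h3 : (B₀ / 2) ^ k ≠ 0 := by positivity
      have h4 : (1 + 2 * ε) ^ k ≠ 0 := by positivity
      field_simp
    linarith
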